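/- The set $\mathcal{F} = \{g = [G] \in \mathrm{PSL}(2,\mathbb{R}) : G = \begin{pmatrix} a & b \\ c & d \end{pmatrix} \in \mathrm{SL}(2,\mathbb{R}),\ 2|ac+bd| < c^2+d^2,\ (ac+bd)^2 + 1 > (c^2+d^2)^2\}$ is a fundamental domain in $\mathrm{PSL}(2,\mathbb{R})$ for the modular group $\mathrm{PSL}(2,\mathbb{Z})$ acting by left multiplication. -/

import Mathlib

open Matrix Complex Set

abbrev SL2R := Matrix.SpecialLinearGroup (Fin 2) ℝ

abbrev PSL2R := SL2R ⧸ Subgroup.center SL2R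

instance : TopologicalSpace SL2R :=
  TopologicalSpace.induced (fun G : SL2R => (G : Matrix (Fin 2) (Fin 2) ℝ)) inferInstance

instance : TopologicalSpace PSL2R := instTopologicalSpaceQuotient

noncomputable def Amat (t : ℝ) : SL2R :=
  ⟨!![Real.exp (t/2), 0; 0, Real.exp (-(t/2))], by
    rw [Matrix.det_fin_two_of, ← Real.exp_add]
    simp⟩

noncomputable def Bmat (t : ℝ) : SL2R :=
  ⟨!![1, t; 0, 1], by rw [Matrix.det_fin_two_of]; ring⟩

noncomputable def Dmat (t : ℝ) : SL2R :=
  ⟨!![Real.cos (t/2), Real.sin (t/2); -Real.sin (t/2), Real.cos (t/2)], by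
    rw [Matrix.det_fin_two_of]
    nlinarith [Real.sin_sq_add_cos_sq (t/2)]⟩

noncomputable def aP (t : ℝ) : PSL2R := QuotientGroup.mk (Amat t)
noncomputable def bP (t : ℝ) : PSL2R := QuotientGroup.mk (Bmat t)
noncomputable def dP (t : ℝ) : PSL2R := QuotientGroup.mk (Dmat t)

noncomputable def moeb (G : SL2R) (z : ℂ) : ℂ :=
  ((G 0 0 : ℝ) * z + (G 0 1 : ℝ)) / ((G 1 0 : ℝ) * z + (G 1 1 : ℝ))

noncomputable def moebP (g : PSL2R) : ℂ → ℂ := moeb (Quotient.out g)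

def H2 : Set ℂ := {z | 0 < z.im}

def IsFundDomH2 (Γ : Subgroup PSL2R) (F : Set ℂ) : Prop :=
  F.Nonempty ∧ F ⊆ H2 ∧ IsOpen F ∧
  (⋃ γ ∈ Γ, moebP γ '' (closure F ∩ H2)) = H2 ∧
  ∀ γ ∈ Γ, γ ≠ 1 → (moebP γ '' F) ∩ F = ∅

def IsFundDomPSL (Γ : Subgroup PSL2R) (F : Set PSL2R) : Prop :=
  F.Nonempty ∧ IsOpen F ∧
  (⋃ γ ∈ Γ, (fun g => γ * g) '' closure F) = Set.univ ∧
  ∀ γ ∈ Γ, γ ≠ 1 → ((fun g => γ * g) '' F) ∩ F = ∅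

def calF (F : Set ℂ) : Set PSL2R :=
  {g | ∃ x y θ : ℝ, (x + y * Complex.I) ∈ F ∧ θ ∈ Set.Ico 0 (2 * Real.pi) ∧
       g = bP x * aP (Real.log y) * dP θ}

noncomputable def PSLZ : Subgroup PSL2R :=
  ((QuotientGroup.mk' (Subgroup.center SL2R)).comp
    (Matrix.SpecialLinearGroup.map (n := Fin 2) (Int.castRingHom ℝ))).range

noncomputable def uu (G : SL2R) : ℝ := G 0 0 * G 1 0 + G 0 1 * G 1 1
noncomputable def vv (G : SL2R) : ℝ := (G 1 0) ^ 2 + (G 1 1) ^ 2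

lemma det_eq (G : SL2R) : G 0 0 * G 1 1 - G 0 1 * G 1 0 = 1 := by
  have := G.2
  rwa [Matrix.det_fin_two] at this

lemma vv_pos (G : SL2R) : 0 < vv G := by
  have h : G 1 0 ≠ 0 ∨ G 1 1 ≠ 0 := by
    by_contra h
    push_neg at h
    have := det_eq G
    rw [h.1, h.2] at this
    simp at this
  rcases h with h | h
  · have := pow_two_pos_of_ne_zero h
    have := sq_nonneg (G 1 1)
    unfold vv; linarith
  · have := pow_two_pos_of_ne_zero h
    have := sq_nonneg (G 1 0)
    unfold vv; linarith

lemma smul_I_coe (G : SL2R) : ((G • UpperHalfPlane.I : UpperHalfPlane) : ℂ)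
    = ((uu G : ℝ) + Complex.I) / ((vv G : ℝ) : ℂ) := by
  rw [UpperHalfPlane.specialLinearGroup_apply]
  have hv := vv_pos G
  have hd := det_eq G
  have hv' : ((vv G : ℝ) : ℂ) ≠ 0 := by
    simp only [ne_eq, Complex.ofReal_eq_zero]
    exact ne_of_gt hv
  simp only [UpperHalfPlane.coe_mk, UpperHalfPlane.coe_I, Algebra.algebraMap_self, RingHom.id_apply]
  have hden : (G 1 0 : ℂ) * Complex.I + (G 1 1 : ℂ) ≠ 0 := by
    intro h
    rw [Complex.ext_iff] at h
    simp at h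
    norm_num [vv, h.1, h.2] at hv
  rw [div_eq_div_iff hden hv']
  unfold uu vv
  push_cast
  rw [Complex.ext_iff]
  constructor
  · simp [pow_two, Complex.add_re, Complex.add_im, Complex.mul_re, Complex.mul_im]
    linear_combination (-(G 1 0 : ℝ)) * hd
  · simp [pow_two, Complex.add_re, Complex.add_im, Complex.mul_re, Complex.mul_im]
    linear_combination ((G 1 1 : ℝ)) * hd

lemma smul_I_re (G : SL2R) : (G • UpperHalfPlane.I : UpperHalfPlane).re = uu G / vv G := by
  have := congrArg Complex.re (smul_I_coe G)
  rw [UpperHalfPlane.coe_re] at this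
  rw [this]
  rw [Complex.div_ofReal_re]
  simp

lemma smul_I_im (G : SL2R) : (G • UpperHalfPlane.I : UpperHalfPlane).im = 1 / vv G := by
  have := congrArg Complex.im (smul_I_coe G)
  rw [UpperHalfPlane.coe_im] at this
  rw [this]
  rw [Complex.div_ofReal_im]
  simp

def condF (G : SL2R) : Prop :=
  2 * |G 0 0 * G 1 0 + G 0 1 * G 1 1| < (G 1 0) ^ 2 + (G 1 1) ^ 2 ∧
  (G 0 0 * G 1 0 + G 0 1 * G 1 1) ^ 2 + 1 > ((G 1 0) ^ 2 + (G 1 1) ^ 2) ^ 2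

lemma condF_iff (G : SL2R) : condF G ↔ 2 * |uu G| < vv G ∧ (uu G) ^ 2 + 1 > (vv G) ^ 2 :=
  Iff.rfl

open ModularGroup in
lemma mem_fdo_iff (G : SL2R) : G • UpperHalfPlane.I ∈ ModularGroup.fdo ↔ condF G := by
  have hv := vv_pos G
  rw [condF_iff, ModularGroup.fdo, Set.mem_setOf_eq]
  have hre := smul_I_re G
  have him := smul_I_im G
  rw [Complex.normSq_apply]
  simp only [UpperHalfPlane.coe_re, UpperHalfPlane.coe_im]
  rw [hre, him]
  rw [show uu G / vv G * (uu G / vv G) + 1 / vv G * (1 / vv G) = (uu G ^ 2 + 1) / vv G ^ 2 by field_simp]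
  constructor
  · rintro ⟨h1, h2⟩
    constructor
    · rw [abs_div, abs_of_pos hv, div_lt_iff₀ hv] at h2
      linarith
    · rw [lt_div_iff₀ (by positivity)] at h1
      nlinarith
  · rintro ⟨h1, h2⟩
    constructor
    · rw [lt_div_iff₀ (by positivity)]
      nlinarith
    · rw [abs_div, abs_of_pos hv, div_lt_iff₀ hv]
      linarith

lemma mem_fd_iff (G : SL2R) : G • UpperHalfPlane.I ∈ ModularGroup.fd ↔
    2 * |uu G| ≤ vv G ∧ (uu G) ^ 2 + 1 ≥ (vv G) ^ 2 := by
  have hv := vv_pos G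
  rw [ModularGroup.fd, Set.mem_setOf_eq]
  have hre := smul_I_re G
  have him := smul_I_im G
  rw [Complex.normSq_apply]
  simp only [UpperHalfPlane.coe_re, UpperHalfPlane.coe_im]
  rw [hre, him]
  rw [show uu G / vv G * (uu G / vv G) + 1 / vv G * (1 / vv G) = (uu G ^ 2 + 1) / vv G ^ 2 by field_simp]
  constructor
  · rintro ⟨h1, h2⟩
    constructor
    · rw [abs_div, abs_of_pos hv, div_le_iff₀ hv] at h2
      linarith
    · rw [le_div_iff₀ (by positivity)] at h1
      nlinarith
  · rintro ⟨h1, h2⟩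
    constructor
    · rw [le_div_iff₀ (by positivity)]
      nlinarith
    · rw [abs_div, abs_of_pos hv, div_le_iff₀ hv]
      linarith

def Fset : Set PSL2R := {g : PSL2R | ∃ G : SL2R, g = QuotientGroup.mk G ∧ condF G}

lemma rep_rel {G H : SL2R} (h : (QuotientGroup.mk G : PSL2R) = QuotientGroup.mk H) :
    ∃ r : ℝ, r ^ 2 = 1 ∧ ∀ i j, H i j = G i j * r := by
  rw [QuotientGroup.eq] at h
  obtain ⟨r, hr1, hr2⟩ := Matrix.SpecialLinearGroup.mem_center_iff.mp h
  refine ⟨r, by simpa using hr1, fun i j => ?_⟩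
  have hH : (H : Matrix (Fin 2) (Fin 2) ℝ) = (G : Matrix (Fin 2) (Fin 2) ℝ) * ((G⁻¹ * H : SL2R) : Matrix (Fin 2) (Fin 2) ℝ) := by
    rw [← Matrix.SpecialLinearGroup.coe_mul, mul_inv_cancel_left]
  rw [← hr2] at hH
  have := congrFun (congrFun hH i) j
  simpa [Matrix.scalar_apply, Matrix.mul_diagonal] using this

lemma condF_of_rel {G H : SL2R} (h : (QuotientGroup.mk G : PSL2R) = QuotientGroup.mk H)
    (hc : condF H) : condF G := by
  obtain ⟨r, hr1, hr2⟩ := rep_rel h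
  rw [condF_iff] at hc ⊢
  have huu : uu H = uu G * r ^ 2 := by
    simp only [uu, hr2]; ring
  have hvv : vv H = vv G * r ^ 2 := by
    simp only [vv, hr2]; ring
  rw [huu, hvv, hr1, mul_one, mul_one] at hc
  exact hc

lemma mk_mem_iff (G : SL2R) : (QuotientGroup.mk G : PSL2R) ∈ Fset ↔ condF G := by
  constructor
  · rintro ⟨H, hGH, hc⟩
    exact condF_of_rel hGH hc
  · intro h
    exact ⟨G, rfl, h⟩

lemma continuous_entry (i j : Fin 2) : Continuous fun G : SL2R => G i j := by
  have h1 : Continuous fun G : SL2R => (G : Matrix (Fin 2) (Fin 2) ℝ) := continuous_induced_dom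
  exact ((continuous_apply j).comp (continuous_apply i)).comp h1

lemma isOpen_condF : IsOpen {G : SL2R | condF G} := by
  have hu : Continuous uu := by
    unfold uu
    exact ((continuous_entry 0 0).mul (continuous_entry 1 0)).add
      ((continuous_entry 0 1).mul (continuous_entry 1 1))
  have hv : Continuous vv := by
    unfold vv
    exact ((continuous_entry 1 0).pow 2).add ((continuous_entry 1 1).pow 2)
  have : {G : SL2R | condF G} = {G | 2 * |uu G| < vv G} ∩ {G | (vv G) ^ 2 < (uu G) ^ 2 + 1} := by
    ext G
    rw [Set.mem_setOf_eq, condF_iff]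
    exact and_congr Iff.rfl ⟨fun h => h, fun h => h⟩
  rw [this]
  exact (isOpen_lt (by continuity) hv).inter (isOpen_lt (hv.pow 2) (by continuity))

lemma isOpen_Fset : IsOpen Fset := by
  have hpre : QuotientGroup.mk ⁻¹' Fset = {G : SL2R | condF G} := by
    ext G
    exact mk_mem_iff G
  have : IsOpen (QuotientGroup.mk ⁻¹' Fset) := hpre ▸ isOpen_condF
  exact isOpen_coinduced.mpr this

noncomputable def pert (x δ : ℝ) : SL2R :=
  ⟨!![Real.exp δ, x * (Real.exp (-(3*δ)) - Real.exp δ); 0, Real.exp (-δ)], by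
    rw [Matrix.det_fin_two_of, ← Real.exp_add]
    simp⟩

lemma pert_zero (x : ℝ) : pert x 0 = 1 := by
  apply Subtype.ext
  ext i j
  fin_cases i <;> fin_cases j <;>
    simp [pert, Matrix.SpecialLinearGroup.coe_one, Matrix.one_apply]

lemma pert_entries (x δ : ℝ) (G : SL2R) :
    (pert x δ * G) 0 0 = Real.exp δ * G 0 0 + x * (Real.exp (-(3*δ)) - Real.exp δ) * G 1 0 ∧
    (pert x δ * G) 0 1 = Real.exp δ * G 0 1 + x * (Real.exp (-(3*δ)) - Real.exp δ) * G 1 1 ∧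
    (pert x δ * G) 1 0 = Real.exp (-δ) * G 1 0 ∧
    (pert x δ * G) 1 1 = Real.exp (-δ) * G 1 1 := by
  refine ⟨?_, ?_, ?_, ?_⟩ <;>
  · show ((pert x δ * G : SL2R) : Matrix (Fin 2) (Fin 2) ℝ) _ _ = _
    rw [Matrix.SpecialLinearGroup.coe_mul, Matrix.mul_apply, Fin.sum_univ_two]
    simp [pert]

lemma condF_pert (G : SL2R) (δ : ℝ) (hδ : 0 < δ)
    (h1 : 2 * |uu G| ≤ vv G) (h2 : (uu G) ^ 2 + 1 ≥ (vv G) ^ 2) :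
    condF (pert (uu G / vv G) δ * G) := by
  set x := uu G / vv G
  obtain ⟨e00, e01, e10, e11⟩ := pert_entries x δ G
  have hv := vv_pos G
  set E := Real.exp δ with hE
  set A := Real.exp (-δ) with hA
  have hEA : E * A = 1 := by rw [hE, hA, ← Real.exp_add]; simp
  have hA3 : Real.exp (-(3*δ)) = A ^ 3 := by
    rw [hA, ← Real.exp_nat_mul]; ring_nf
  have hApos : 0 < A := Real.exp_pos _
  have hAlt : A < 1 := by
    rw [hA]; exact Real.exp_lt_one_iff.mpr (by linarith)
  have hEpos : 0 < E := Real.exp_pos _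
  have hx : x * vv G = uu G := div_mul_cancel₀ _ (ne_of_gt hv)
  have huu' : uu (pert x δ * G) = uu G * A ^ 4 := by
    have expand : uu (pert x δ * G) = (E * A) * uu G + x * (A ^ 4 - E * A) * vv G := by
      simp only [uu, vv]
      rw [e00, e01, e10, e11, hA3]
      ring
    rw [expand]
    linear_combination (uu G - x * vv G) * hEA + (A ^ 4 - 1) * hx
  have hvv' : vv (pert x δ * G) = vv G * A ^ 2 := by
    simp only [vv]
    rw [e10, e11]
    ring
  clear_value E A
  clear e00 e01 e10 e11 hE hA
  have hA2 : A ^ 2 < 1 := by nlinarith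
  have hA4 : A ^ 4 < 1 := by nlinarith
  have hA2pos : 0 < A ^ 2 := pow_pos hApos 2
  have hA4pos : 0 < A ^ 4 := pow_pos hApos 4
  have hu2 : (uu G) ^ 2 ≤ 1 / 3 := by
    have habs : 4 * (uu G) ^ 2 ≤ (vv G) ^ 2 := by
      nlinarith [abs_nonneg (uu G), _root_.sq_abs (uu G), h1]
    nlinarith [h2]
  rw [condF_iff, huu', hvv']
  constructor
  · rw [abs_mul, abs_of_pos hA4pos]
    have key : vv G * A ^ 4 < vv G * A ^ 2 := by nlinarith [mul_pos hv (mul_pos hA2pos (by nlinarith : (0:ℝ) < 1 - A ^ 2))]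
    nlinarith [mul_le_mul_of_nonneg_right h1 (le_of_lt hA4pos)]
  · have key := mul_pos (by linarith : (0:ℝ) < 1 - A ^ 4)
      (by nlinarith : (0:ℝ) < 1 - (uu G) ^ 2 * A ^ 4)
    nlinarith [mul_le_mul_of_nonneg_right (ge_iff_le.mp h2) (le_of_lt hA4pos), key]

lemma continuous_pert_mul (x : ℝ) (G : SL2R) :
    Continuous fun δ : ℝ => pert x δ * G := by
  apply continuous_induced_rng.mpr
  show Continuous fun δ : ℝ => ((pert x δ * G : SL2R) : Matrix (Fin 2) (Fin 2) ℝ)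
  simp only [Matrix.SpecialLinearGroup.coe_mul]
  apply Continuous.matrix_mul ?_ continuous_const
  apply continuous_matrix
  intro i j
  fin_cases i <;> fin_cases j <;> simp [pert] <;> fun_prop

lemma mem_closure_Fset (G : SL2R)
    (h1 : 2 * |uu G| ≤ vv G) (h2 : (uu G) ^ 2 + 1 ≥ (vv G) ^ 2) :
    (QuotientGroup.mk G : PSL2R) ∈ closure Fset := by
  set x := uu G / vv G with hx
  have hcont : Continuous fun δ : ℝ => (QuotientGroup.mk (pert x δ * G) : PSL2R) :=
    continuous_quot_mk.comp (continuous_pert_mul x G)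
  have h0 : (QuotientGroup.mk (pert x 0 * G) : PSL2R) = QuotientGroup.mk G := by
    rw [pert_zero, one_mul]
  apply mem_closure_of_tendsto (f := fun δ : ℝ => (QuotientGroup.mk (pert x δ * G) : PSL2R))
    (b := nhdsWithin (0:ℝ) (Set.Ioi 0))
  · rw [← h0]
    exact (hcont.tendsto 0).mono_left nhdsWithin_le_nhds
  · filter_upwards [self_mem_nhdsWithin] with δ hδ
    exact (mk_mem_iff _).mpr (condF_pert G δ hδ h1 h2)

lemma map_smul_eq (γ : Matrix.SpecialLinearGroup (Fin 2) ℤ) (w : UpperHalfPlane) :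
    (Matrix.SpecialLinearGroup.map (Int.castRingHom ℝ) γ) • w = γ • w := by
  have h1 := congrArg (fun z : UpperHalfPlane => (z : ℂ))
    (UpperHalfPlane.specialLinearGroup_apply (Matrix.SpecialLinearGroup.map (Int.castRingHom ℝ) γ) w)
  have h2 := congrArg (fun z : UpperHalfPlane => (z : ℂ))
    (UpperHalfPlane.specialLinearGroup_apply γ w)
  dsimp only at h1 h2
  apply UpperHalfPlane.ext
  rw [h1, h2]
  norm_num [Matrix.SpecialLinearGroup.map_apply_coe]

lemma det_eqZ (g : Matrix.SpecialLinearGroup (Fin 2) ℤ) :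
    g 0 0 * g 1 1 - g 0 1 * g 1 0 = 1 := by
  have := g.2
  rwa [Matrix.det_fin_two] at this

lemma central_of_diag (γ₀ : Matrix.SpecialLinearGroup (Fin 2) ℤ)
    (hc : γ₀ 1 0 = 0) (hb : γ₀ 0 1 = 0) (hd : γ₀ 1 1 = γ₀ 0 0) :
    (QuotientGroup.mk (Matrix.SpecialLinearGroup.map (Int.castRingHom ℝ) γ₀) : PSL2R) = 1 := by
  rw [QuotientGroup.eq_one_iff]
  rw [Matrix.SpecialLinearGroup.mem_center_iff]
  refine ⟨((γ₀ 0 0 : ℤ) : ℝ), ?_, ?_⟩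
  · have := det_eqZ γ₀
    rw [hc, hb, hd] at this
    have h2 : (γ₀ 0 0 : ℤ) * (γ₀ 0 0 : ℤ) = 1 := by linarith
    have hcard : Fintype.card (Fin 2) = 2 := by simp
    rw [hcard]
    have h3 : (γ₀ 0 0 : ℤ) ^ 2 = 1 := by nlinarith [h2]
    exact_mod_cast h3
  · rw [Matrix.scalar_apply, Matrix.SpecialLinearGroup.map_apply_coe]
    ext i j
    fin_cases i <;> fin_cases j <;>
      simp [Matrix.diagonal_apply, Matrix.map_apply, hb, hc, hd]

lemma coe_fix_aux {γ₀ : Matrix.SpecialLinearGroup (Fin 2) ℤ} {w : UpperHalfPlane}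
    (hfix : w = γ₀ • w) (hc : γ₀ 1 0 = 0) {e : ℤ} (ha : γ₀ 0 0 = e) (hd : γ₀ 1 1 = e)
    (he : e = 1 ∨ e = -1) : γ₀ 0 1 = 0 := by
  have h2 := congrArg (fun z : UpperHalfPlane => (z : ℂ))
    (UpperHalfPlane.specialLinearGroup_apply γ₀ w)
  dsimp only at h2
  rw [UpperHalfPlane.coe_mk, ha, hc, hd] at h2
  have hfix' := (congrArg (fun z : UpperHalfPlane => (z : ℂ)) hfix).trans h2
  rcases he with he | he <;> subst he <;>
    [skip; skip] <;>
    · push_cast at hfix'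
      field_simp at hfix'
      simp at hfix'
      exact_mod_cast hfix'


theorem stmt11 :
    IsFundDomPSL PSLZ
      {g : PSL2R | ∃ G : SL2R, g = QuotientGroup.mk G ∧
        2 * |G 0 0 * G 1 0 + G 0 1 * G 1 1| < (G 1 0) ^ 2 + (G 1 1) ^ 2 ∧
        (G 0 0 * G 1 0 + G 0 1 * G 1 1) ^ 2 + 1 > ((G 1 0) ^ 2 + (G 1 1) ^ 2) ^ 2} := by
  show IsFundDomPSL PSLZ Fset
  refine ⟨?_, isOpen_Fset, ?_, ?_⟩
  · -- nonempty
    refine ⟨QuotientGroup.mk (⟨!![(2:ℝ), 0; 0, 1/2], by norm_num [Matrix.det_fin_two_of]⟩ : SL2R), ?_⟩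
    apply (mk_mem_iff _).mpr
    unfold condF
    norm_num [Matrix.cons_val_zero, Matrix.cons_val_one, Matrix.head_cons]
  · -- covering
    rw [Set.eq_univ_iff_forall]
    intro g
    obtain ⟨G, rfl⟩ := QuotientGroup.mk_surjective g
    obtain ⟨γ₀, hγ₀⟩ := ModularGroup.exists_smul_mem_fd (G • UpperHalfPlane.I)
    set Γ : SL2R := Matrix.SpecialLinearGroup.map (Int.castRingHom ℝ) γ₀ with hΓ
    have key : (Γ * G) • UpperHalfPlane.I ∈ ModularGroup.fd := by
      rw [mul_smul, hΓ, map_smul_eq]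
      exact hγ₀
    obtain ⟨hk1, hk2⟩ := (mem_fd_iff _).mp key
    have hcl := mem_closure_Fset _ hk1 hk2
    rw [Set.mem_iUnion₂]
    refine ⟨(QuotientGroup.mk Γ)⁻¹, inv_mem ⟨γ₀, rfl⟩, QuotientGroup.mk (Γ * G), hcl, ?_⟩
    show (QuotientGroup.mk Γ)⁻¹ * QuotientGroup.mk (Γ * G) = QuotientGroup.mk G
    rw [QuotientGroup.mk_mul]
    group
  · -- disjointness
    rintro γ ⟨γ₀, rfl⟩ hne
    set Γ : SL2R := Matrix.SpecialLinearGroup.map (Int.castRingHom ℝ) γ₀ with hΓ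
    rw [Set.eq_empty_iff_forall_notMem]
    rintro p ⟨⟨q, hqF, rfl⟩, hpF⟩
    obtain ⟨Q, rfl, hQc⟩ := hqF
    have hp : condF (Γ * Q) := by
      apply (mk_mem_iff _).mp
      rw [QuotientGroup.mk_mul]
      exact hpF
    have hz : Q • UpperHalfPlane.I ∈ ModularGroup.fdo := (mem_fdo_iff Q).mpr hQc
    have hgz : γ₀ • (Q • UpperHalfPlane.I) ∈ ModularGroup.fdo := by
      rw [← map_smul_eq, ← mul_smul]
      exact (mem_fdo_iff _).mpr hp
    have hc := ModularGroup.c_eq_zero hz hgz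
    have hfix := ModularGroup.eq_smul_self_of_mem_fdo_mem_fdo hz hgz
    have had : γ₀ 0 0 * γ₀ 1 1 = 1 := by
      have := det_eqZ γ₀
      rw [hc] at this
      linarith
    rcases Int.eq_one_or_neg_one_of_mul_eq_one' had with ⟨ha, hd⟩ | ⟨ha, hd⟩
    · have hb := coe_fix_aux hfix hc ha hd (Or.inl rfl)
      exact hne (central_of_diag γ₀ hc hb (by rw [ha, hd]))
    · have hb := coe_fix_aux hfix hc ha hd (Or.inr rfl)
      exact hne (central_of_diag γ₀ hc hb (by rw [ha, hd]))
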